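/- Let k | n. If the maximal pair 𝒜 = ⟨A,0⟩ is immediately followed by the maximal pair ℬ = ⟨B,0⟩ in the ≻-decreasing list of all maximal pairs of Σ^n × Z_k, then A is a prefix of the concatenation red(A)·red(B) of their reductions. -/

import Mathlib

/-- Right rotation by `i` of a pair in `Σ^n × ℤ/k`. -/
def rotPair (s k : ℕ) (i : ℕ) (P : List (Fin s) × ZMod k) : List (Fin s) × ZMod k :=
  (P.1.rotate i, P.2 + (i : ZMod k))

/-- The order ≻ : `P ≻ Q` iff (same second component and `P.1 > Q.1` lexicographically)
or `(k-1-P.2) > (k-1-Q.2)`, i.e. `P.2 < Q.2` as residues. -/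
def succPair (s k : ℕ) (P Q : List (Fin s) × ZMod k) : Prop :=
  (List.Lex (· < ·) Q.1 P.1 ∧ P.2 = Q.2) ∨ P.2.val < Q.2.val

/-- A pair is maximal when no rotation of it is ≻-greater than it. -/
def isMaxPair (s k : ℕ) (P : List (Fin s) × ZMod k) : Prop :=
  ∀ i : ℕ, ¬ succPair s k (rotPair s k i P) P

/-- Length of the reduction of a word: the least `p` with `k ∣ p`, `p ∣ |A|`
and `A = (A.take p)^{|A|/p}`. -/
noncomputable def reduceLen (s k : ℕ) (A : List (Fin s)) : ℕ :=
  sInf {p : ℕ | k ∣ p ∧ p ∣ A.length ∧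
    A = (List.replicate (A.length / p) (A.take p)).flatten}

/-- The reduction of a word. -/
noncomputable def reduceWord (s k : ℕ) (A : List (Fin s)) : List (Fin s) := A.take (reduceLen s k A)

namespace Aux13
variable {α : Type*} {β : Type*} [LinearOrder β]

lemma flatten_rep_length (w : List α) (m : ℕ) :
    ((List.replicate m w).flatten).length = m * w.length := by
  induction m with
  | zero => simp
  | succ m ih => simp [List.replicate_succ, ih, Nat.succ_mul]; ring

lemma flatten_rep_getElem? (w : List α) (m x : ℕ) (hx : x < m * w.length) :
    ((List.replicate m w).flatten)[x]? = w[x % w.length]? := by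
  have hw : 0 < w.length := by
    rcases Nat.eq_zero_or_pos w.length with h | h
    · rw [h, Nat.mul_zero] at hx; omega
    · exact h
  induction m generalizing x with
  | zero => simp at hx
  | succ m ih =>
    rw [List.replicate_succ, List.flatten_cons]
    by_cases h : x < w.length
    · rw [List.getElem?_append_left h, Nat.mod_eq_of_lt h]
    · push_neg at h
      rw [List.getElem?_append_right h]
      rw [ih (x - w.length) (by rw [Nat.succ_mul] at hx; omega)]
      rw [Nat.mod_eq_sub_mod h]

lemma periodize_iff (z : α) (A : List α) (p : ℕ) (hp : 0 < p) (hpn : p ∣ A.length)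
    (hple : p ≤ A.length) :
    A = (List.replicate (A.length / p) (A.take p)).flatten ↔
      ∀ x, x < A.length → A.getD x z = A.getD (x % p) z := by
  have htlen : (A.take p).length = p := by rw [List.length_take, min_eq_left hple]
  have hlt : A.length / p * (A.take p).length = A.length := by
    rw [htlen, Nat.div_mul_cancel hpn]
  have key : A = (List.replicate (A.length / p) (A.take p)).flatten ↔
      ∀ x, x < A.length → A[x]? = A[x % p]? := by
    constructor
    · intro h x hx
      conv_lhs => rw [h]
      rw [flatten_rep_getElem? (A.take p) _ x (by omega)]
      rw [htlen, List.getElem?_take, if_pos (Nat.mod_lt _ hp)]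
    · intro h
      apply List.ext_getElem?
      intro i
      by_cases hi : i < A.length
      · rw [flatten_rep_getElem? (A.take p) _ i (by omega), htlen,
          List.getElem?_take, if_pos (Nat.mod_lt _ hp)]
        exact h i hi
      · rw [List.getElem?_eq_none (by omega),
          List.getElem?_eq_none (by rw [flatten_rep_length]; omega)]
  rw [key]
  constructor
  · intro h x hx
    rw [List.getD_eq_getElem?_getD, List.getD_eq_getElem?_getD, h x hx]
  · intro h x hx
    have h1 : x % p < A.length := lt_of_lt_of_le (Nat.mod_lt _ hp) hple
    have := h x hx
    rw [List.getD_eq_getElem _ _ hx, List.getD_eq_getElem _ _ h1] at this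
    rw [List.getElem?_eq_getElem hx, List.getElem?_eq_getElem h1, this]

lemma lex_iff : ∀ (l₁ l₂ : List β), l₁.length = l₂.length →
    (List.Lex (· < ·) l₁ l₂ ↔ ∃ d, ∃ (_ : d < l₁.length) (_ : d < l₂.length),
      (∀ x (hx₁ : x < l₁.length) (hx₂ : x < l₂.length), x < d → l₁[x] = l₂[x]) ∧ l₁[d] < l₂[d])
  | [], [], _ => by
    constructor
    · intro h; cases h
    · rintro ⟨d, hd, -⟩; simp at hd
  | [], b :: l₂, h => by simp at h
  | a :: l₁, [], h => by simp at h
  | a :: l₁, b :: l₂, h => by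
    have hlen : l₁.length = l₂.length := by simpa using h
    constructor
    · intro hl
      cases hl with
      | rel hab => exact ⟨0, by simp, by simp, fun x _ _ hx => by omega, by simpa using hab⟩
      | cons hl =>
        obtain ⟨d, h₁, h₂, hpre, hlt⟩ := (lex_iff l₁ l₂ hlen).mp hl
        refine ⟨d + 1, by simpa using h₁, by simpa using h₂, ?_, by simpa using hlt⟩
        intro x hx₁ hx₂ hxd
        cases x with
        | zero => simp
        | succ y => simpa using hpre y (by simpa using hx₁) (by simpa using hx₂) (by omega)
    · rintro ⟨d, h₁, h₂, hpre, hlt⟩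
      cases d with
      | zero =>
        exact List.Lex.rel (by simpa using hlt)
      | succ d =>
        have hab : a = b := by exact hpre 0 (by simp) (by simp) (by omega)
        subst hab
        refine List.Lex.cons ((lex_iff l₁ l₂ hlen).mpr
          ⟨d, by simpa using h₁, by simpa using h₂, ?_, by simpa using hlt⟩)
        intro x hx₁ hx₂ hxd
        exact hpre (x + 1) (by simpa using hx₁) (by simpa using hx₂) (by omega)

lemma lex_iff' (z : β) (l₁ l₂ : List β) (h : l₁.length = l₂.length) :
    List.Lex (· < ·) l₁ l₂ ↔ ∃ d, d < l₁.length ∧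
      (∀ x, x < d → l₁.getD x z = l₂.getD x z) ∧ l₁.getD d z < l₂.getD d z := by
  rw [lex_iff l₁ l₂ h]
  constructor
  · rintro ⟨d, h₁, h₂, hpre, hlt⟩
    refine ⟨d, h₁, fun x hx => ?_, ?_⟩
    · rw [List.getD_eq_getElem _ _ (by omega), List.getD_eq_getElem _ _ (by omega)]
      exact hpre x (by omega) (by omega) hx
    · rw [List.getD_eq_getElem _ _ h₁, List.getD_eq_getElem _ _ h₂]
      exact hlt
  · rintro ⟨d, h₁, hpre, hlt⟩
    refine ⟨d, h₁, by omega, fun x hx₁ hx₂ hx => ?_, ?_⟩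
    · have := hpre x hx
      rwa [List.getD_eq_getElem _ _ hx₁, List.getD_eq_getElem _ _ hx₂] at this
    · have := hlt
      rwa [List.getD_eq_getElem _ _ h₁, List.getD_eq_getElem _ _ (by omega)] at this

lemma getD_rotate (z : α) (A : List α) (i x : ℕ) (hx : x < A.length) :
    (A.rotate i).getD x z = A.getD ((x + i) % A.length) z := by
  rw [List.getD_eq_getElem _ _ (by rw [List.length_rotate]; exact hx),
    List.getElem_rotate, List.getD_eq_getElem _ _ (Nat.mod_lt _ (by omega))]

lemma getD_set (z : α) (A : List α) (e x : ℕ) (v : α) (hx : x < A.length) :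
    (A.set e v).getD x z = if x = e then v else A.getD x z := by
  rw [List.getD_eq_getElem _ _ (by rw [List.length_set]; exact hx),
    List.getElem_set]
  split
  · rename_i h; rw [if_pos h.symm]
  · rename_i h; rw [if_neg (fun hh => h hh.symm), List.getD_eq_getElem _ _ hx]

lemma getD_take (z : α) (A : List α) (m x : ℕ) (hx : x < m) :
    (A.take m).getD x z = A.getD x z := by
  rw [List.getD_eq_getElem?_getD, List.getD_eq_getElem?_getD, List.getElem?_take, if_pos hx]

lemma getD_drop (z : α) (A : List α) (m x : ℕ) :
    (A.drop m).getD x z = A.getD (m + x) z := by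
  rw [List.getD_eq_getElem?_getD, List.getD_eq_getElem?_getD, List.getElem?_drop]

lemma bezout_mod (r p : ℕ) (hr : 0 < r) (hrp : r < p) :
    ∃ t : ℕ, (t * r) % p = Nat.gcd r p := by
  have hp : 0 < p := by omega
  have hg : (Nat.gcd r p : ℤ) = r * Nat.gcdA r p + p * Nat.gcdB r p := Nat.gcd_eq_gcd_ab r p
  set a := Nat.gcdA r p with ha
  set b := Nat.gcdB r p with hb
  have hpz : ((p : ℤ)) ≠ 0 := by exact_mod_cast hp.ne'
  refine ⟨(a % (p : ℤ)).toNat, ?_⟩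
  have ht : (((a % (p : ℤ)).toNat : ℤ)) = a % p := Int.toNat_of_nonneg (Int.emod_nonneg a hpz)
  have h2 : (((a % (p : ℤ)).toNat * r : ℕ) : ℤ) % p = ((Nat.gcd r p : ℕ) : ℤ) % p := by
    push_cast
    rw [ht]
    calc (a % (p:ℤ) * r) % p = ((a % (p:ℤ)) % p * (r % p)) % p := by
          rw [← Int.mul_emod]
      _ = (a * r) % p := by rw [Int.emod_emod_of_dvd a dvd_rfl, ← Int.mul_emod]
      _ = ((Nat.gcd r p : ℤ) - p * b) % p := by
          congr 1
          rw [hg]; ring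
      _ = ((Nat.gcd r p : ℤ) - b * p) % p := by ring_nf
      _ = (Nat.gcd r p : ℤ) % p := by
          rw [Int.sub_emod, Int.mul_emod_left, sub_zero, Int.emod_emod_of_dvd _ dvd_rfl]
  rw [← Int.natCast_mod, ← Int.natCast_mod] at h2
  have h3 : ((a % (p : ℤ)).toNat * r) % p = (Nat.gcd r p) % p := by exact_mod_cast h2
  rw [h3]
  exact Nat.mod_eq_of_lt (lt_of_le_of_lt (Nat.gcd_le_left p hr) hrp)

lemma period_of_shift (z : α) (A : List α) (p r : ℕ) (hr : 0 < r) (hrp : r < p)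
    (hshift : ∀ x, x < p → A.getD ((x + r) % p) z = A.getD x z) :
    ∀ x, x < p → A.getD x z = A.getD (x % Nat.gcd r p) z := by
  have hp : 0 < p := by omega
  set g := Nat.gcd r p with hgdef
  have hg0 : 0 < g := Nat.gcd_pos_of_pos_left p hr
  have hgp : g ∣ p := Nat.gcd_dvd_right r p
  have Q : ∀ t x, x < p → A.getD ((x + t * r) % p) z = A.getD x z := by
    intro t
    induction t with
    | zero => intro x hx; simp [Nat.mod_eq_of_lt hx]
    | succ t ih =>
      intro x hx
      have h1 := hshift ((x + t * r) % p) (Nat.mod_lt _ hp)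
      have h2 : (x + (t + 1) * r) % p = (((x + t * r) % p) + r) % p := by
        have e1 : x + (t + 1) * r = (x + t * r) + r := by ring
        rw [e1, Nat.add_mod (x + t * r) r p]
        conv_rhs => rw [Nat.add_mod]
        rw [Nat.mod_mod_of_dvd _ dvd_rfl]
      rw [h2, h1]
      exact ih x hx
  obtain ⟨t, htr⟩ := bezout_mod r p hr hrp
  have hgshift : ∀ x, x < p → A.getD ((x + g) % p) z = A.getD x z := by
    intro x hx
    have h4 : (x + t * r) % p = (x + g) % p := by
      rw [Nat.add_mod, htr, Nat.mod_eq_of_lt hx, ← hgdef]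
    have := Q t x hx
    rwa [h4] at this
  intro x
  induction x using Nat.strong_induction_on with
  | _ x ih =>
    intro hx
    by_cases hxg : x < g
    · rw [Nat.mod_eq_of_lt hxg]
    · push_neg at hxg
      have h5 : A.getD x z = A.getD (x - g) z := by
        have h6 := hgshift (x - g) (by omega)
        have e1 : (x - g + g) % p = x := by
          rw [Nat.sub_add_cancel hxg]; exact Nat.mod_eq_of_lt hx
        rw [e1] at h6
        exact h6
      rw [h5, Nat.mod_eq_sub_mod hxg]
      exact ih (x - g) (by omega) (by omega)

lemma lex_trichotomy (z : β) (l₁ l₂ : List β) (h : l₁.length = l₂.length) :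
    List.Lex (· < ·) l₁ l₂ ∨ l₁ = l₂ ∨ List.Lex (· < ·) l₂ l₁ := by
  classical
  by_cases he : l₁ = l₂
  · exact Or.inr (Or.inl he)
  have hex : ∃ d, d < l₁.length ∧ l₁.getD d z ≠ l₂.getD d z := by
    by_contra hc; push_neg at hc
    apply he
    apply List.ext_getElem h
    intro i h1 h2
    have := hc i h1
    rwa [List.getD_eq_getElem _ _ h1, List.getD_eq_getElem _ _ h2] at this
  obtain ⟨hdn, hdne⟩ := Nat.find_spec hex
  have hmin : ∀ m, m < Nat.find hex → l₁.getD m z = l₂.getD m z := by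
    intro m hm
    by_contra hne
    exact (Nat.find_min hex hm) ⟨by omega, hne⟩
  rcases lt_trichotomy (l₁.getD (Nat.find hex) z) (l₂.getD (Nat.find hex) z) with hl | hl | hl
  · exact Or.inl ((lex_iff' z l₁ l₂ h).mpr ⟨Nat.find hex, hdn, hmin, hl⟩)
  · exact absurd hl hdne
  · exact Or.inr (Or.inr ((lex_iff' z l₂ l₁ h.symm).mpr
      ⟨Nat.find hex, by omega, fun m hm => (hmin m hm).symm, hl⟩))

lemma succPair_iff (s k : ℕ) (A B : List (Fin s)) :
    succPair s k (A, (0 : ZMod k)) (B, 0) ↔ List.Lex (· < ·) B A := by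
  simp [succPair]

lemma isMaxPair_iff (s k : ℕ) (hk : 0 < k) (A : List (Fin s)) :
    isMaxPair s k (A, (0 : ZMod k)) ↔
      ∀ i : ℕ, k ∣ i → ¬ List.Lex (· < ·) A (A.rotate i) := by
  haveI : NeZero k := ⟨hk.ne'⟩
  unfold isMaxPair succPair rotPair
  simp only [zero_add, ZMod.val_zero, Nat.not_lt_zero, or_false, not_and]
  constructor
  · intro h i hki hlex
    exact absurd ((ZMod.natCast_eq_zero_iff i k).mpr hki) (h i hlex)
  · intro h i hlex hz
    exact h i ((ZMod.natCast_eq_zero_iff i k).mp hz) hlex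

end Aux13

/-- If the maximal pair `⟨A,0⟩` is immediately followed by the maximal pair `⟨B,0⟩`
in the ≻-decreasing list of all maximal pairs of `Σ^n × ℤ/k` (with `k ∣ n`), then
`A` is a prefix of `red(A) ++ red(B)`. -/
theorem stmt13 (s n k : ℕ) (hs : 2 ≤ s) (hn : 0 < n) (hk : 0 < k) (hkn : k ∣ n)
    (A B : List (Fin s)) (hA : A.length = n) (hB : B.length = n)
    (hmaxA : isMaxPair s k (A, (0 : ZMod k)))
    (hmaxB : isMaxPair s k (B, (0 : ZMod k)))
    (hAB : succPair s k (A, (0 : ZMod k)) (B, 0))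
    (hnext : ¬ ∃ C : List (Fin s), C.length = n ∧ isMaxPair s k (C, (0 : ZMod k)) ∧
        succPair s k (A, (0 : ZMod k)) (C, 0) ∧ succPair s k (C, (0 : ZMod k)) (B, 0)) :
    A <+: reduceWord s k A ++ reduceWord s k B := by
  classical
  set z : Fin s := ⟨0, by omega⟩ with hzdef
  have hzval : z.val = 0 := rfl
  have hzbot : ∀ w : Fin s, ¬ w < z := by
    intro w hw; rw [Fin.lt_def, hzval] at hw; omega
  have hmA : ∀ i, k ∣ i → ¬ List.Lex (· < ·) A (A.rotate i) :=
    (Aux13.isMaxPair_iff s k hk A).mp hmaxA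
  have hBA : List.Lex (· < ·) B A := (Aux13.succPair_iff s k A B).mp hAB
  -- the period set of A
  have hpeq : reduceLen s k A = sInf {p : ℕ | k ∣ p ∧ p ∣ A.length ∧
      A = (List.replicate (A.length / p) (A.take p)).flatten} := rfl
  have hnSA : n ∈ {p : ℕ | k ∣ p ∧ p ∣ A.length ∧
      A = (List.replicate (A.length / p) (A.take p)).flatten} := by
    refine ⟨hkn, by rw [hA], ?_⟩
    rw [hA, Nat.div_self hn]
    simp [List.take_of_length_le hA.le]
  set p := reduceLen s k A with hpdef
  have hpSA : p ∈ {p : ℕ | k ∣ p ∧ p ∣ A.length ∧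
      A = (List.replicate (A.length / p) (A.take p)).flatten} := by
    rw [hpeq]; exact Nat.sInf_mem ⟨n, hnSA⟩
  obtain ⟨hkp, hpA, hArep⟩ := hpSA
  have hpn : p ∣ n := by rwa [hA] at hpA
  have hp0 : 0 < p := by
    rcases Nat.eq_zero_or_pos p with h | h
    · rw [h] at hpn; rw [Nat.zero_dvd] at hpn; omega
    · exact h
  have hpleN : p ≤ n := Nat.le_of_dvd hn hpn
  have HA : ∀ x, x < n → A.getD x z = A.getD (x % p) z := by
    have := (Aux13.periodize_iff z A p hp0 hpA (by omega)).mp hArep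
    intro x hx; exact this x (by omega)
  have hminA : ∀ g, g ∈ {p : ℕ | k ∣ p ∧ p ∣ A.length ∧
      A = (List.replicate (A.length / p) (A.take p)).flatten} → p ≤ g := by
    intro g hg; rw [hpeq]; exact Nat.sInf_le hg
  by_cases hpn' : p = n
  · have h1 : reduceWord s k A = A := by
      unfold reduceWord
      rw [← hpdef, hpn', ← hA, List.take_length]
    rw [h1]
    exact List.prefix_append A _
  have hplt : p < n := lt_of_le_of_ne hpleN hpn'
  have hmlt : p + p ≤ n := by
    obtain ⟨m, hm⟩ := hpn
    have hm2 : 2 ≤ m := by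
      by_contra hcon; push_neg at hcon
      interval_cases m <;> omega
    calc p + p = p * 2 := by ring
      _ ≤ p * m := Nat.mul_le_mul_left p hm2
      _ = n := hm.symm
  -- the last nonzero position τ of the first period block
  have hexnz : ∃ t, t < p ∧ A.getD t z ≠ z := by
    by_contra h; push_neg at h
    have hall : ∀ x, x < n → A.getD x z = z := fun x hx =>
      (HA x hx).trans (h _ (Nat.mod_lt _ hp0))
    obtain ⟨d, hd, -, hlt⟩ := (Aux13.lex_iff' z B A (by omega)).mp hBA
    rw [hB] at hd
    rw [hall d (by omega)] at hlt
    exact hzbot _ hlt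
  obtain ⟨t0, ht0p, ht0⟩ := hexnz
  set τ := Nat.findGreatest (fun t => t < p ∧ A.getD t z ≠ z) p with hτdef
  have hτP : τ < p ∧ A.getD τ z ≠ z :=
    Nat.findGreatest_spec (P := fun t => t < p ∧ A.getD t z ≠ z) (le_of_lt ht0p) ⟨ht0p, ht0⟩
  obtain ⟨hτp, hτnz⟩ := hτP
  have hgrt : ∀ t, τ < t → t < p → A.getD t z = z := by
    intro t h1 h2
    by_contra h3
    exact (Nat.findGreatest_is_greatest h1 (le_of_lt h2)) (show t < p ∧ _ from ⟨h2, h3⟩)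
  set e := n - p + τ with hedef
  have he2 : e < n := by omega
  have hep : e % p = τ := by
    obtain ⟨c, hc⟩ : p ∣ (n - p) := Nat.dvd_sub hpn dvd_rfl
    rw [hedef, hc, Nat.mul_add_mod, Nat.mod_eq_of_lt hτp]
  have heτ : A.getD e z = A.getD τ z := by rw [HA e he2, hep]
  have hvpos : 0 < (A.getD e z).val := by
    rw [heτ]
    rcases Nat.eq_zero_or_pos (A.getD τ z).val with h | h
    · exfalso; apply hτnz; apply Fin.ext; rw [h, hzval]
    · exact h
  set v' : Fin s := ⟨(A.getD e z).val - 1, by have := (A.getD e z).isLt; omega⟩ with hv'def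
  have hv'val : v'.val = (A.getD e z).val - 1 := rfl
  have hv'lt : v' < A.getD e z := by
    rw [Fin.lt_def, hv'val]; omega
  set C := A.set e v' with hCdef
  have hClen : C.length = n := by rw [hCdef, List.length_set, hA]
  have hCe : C.getD e z = v' := by
    rw [hCdef, Aux13.getD_set z A e e v' (by omega), if_pos rfl]
  have hCx : ∀ x, x < n → x ≠ e → C.getD x z = A.getD x z := by
    intro x h1 h2; rw [hCdef, Aux13.getD_set z A e x v' (by omega), if_neg h2]
  have hCA : List.Lex (· < ·) C A := by
    rw [Aux13.lex_iff' z C A (by omega)]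
    refine ⟨e, by omega, fun x hx => hCx x (by omega) (by omega), ?_⟩
    rw [hCe]; exact hv'lt
  -- no shorter shift-period: minimality of p
  have hsmall : ∀ r, 0 < r → r < p → k ∣ r →
      ¬ (∀ x, x < p → A.getD ((x + r) % p) z = A.getD x z) := by
    intro r hr hrp hkr hshift
    have hgP : ∀ x, x < p → A.getD x z = A.getD (x % Nat.gcd r p) z :=
      Aux13.period_of_shift z A p r hr hrp hshift
    have hgp : Nat.gcd r p ∣ p := Nat.gcd_dvd_right r p
    have hg0 : 0 < Nat.gcd r p := Nat.gcd_pos_of_pos_left p hr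
    have hgn : ∀ x, x < n → A.getD x z = A.getD (x % Nat.gcd r p) z := by
      intro x hx
      rw [HA x hx, hgP (x % p) (Nat.mod_lt _ hp0), Nat.mod_mod_of_dvd x hgp]
    have hgSA : Nat.gcd r p ∈ {p : ℕ | k ∣ p ∧ p ∣ A.length ∧
        A = (List.replicate (A.length / p) (A.take p)).flatten} := by
      refine ⟨Nat.dvd_gcd hkr hkp, by rw [hA]; exact hgp.trans hpn, ?_⟩
      rw [Aux13.periodize_iff z A _ hg0 (by rw [hA]; exact hgp.trans hpn)
        (by rw [hA]; exact le_trans (Nat.le_of_dvd hp0 hgp) (by omega))]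
      intro x hx; exact hgn x (by omega)
    have h8 := hminA _ hgSA
    have hglt : Nat.gcd r p < p := lt_of_le_of_lt (Nat.gcd_le_left p hr) hrp
    omega
  -- C is maximal
  have hCmax : ∀ i, k ∣ i → ¬ List.Lex (· < ·) C (C.rotate i) := by
    intro i hki hlex
    have hrot : C.rotate (i % n) = C.rotate i := by
      have := List.rotate_mod C i
      rwa [hClen] at this
    rw [← hrot] at hlex
    set r := i % n with hrdef
    have hrn : r < n := Nat.mod_lt _ hn
    have hkr : k ∣ r := (Nat.dvd_mod_iff hkn).mpr hki
    rcases Nat.eq_zero_or_pos r with hr0 | hr0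
    · rw [hr0, List.rotate_zero] at hlex
      exact (asymm hlex) hlex
    have hRot : ∀ x, x < n → (C.rotate r).getD x z = C.getD ((x + r) % n) z := by
      intro x hx
      rw [Aux13.getD_rotate z C r x (by omega), hClen]
    suffices hlex2 : List.Lex (· < ·) (C.rotate r) C by exact (asymm hlex2) hlex
    rw [Aux13.lex_iff' z _ C (by rw [List.length_rotate])]
    rw [List.length_rotate, hClen]
    set e' := (e + (n - r)) % n with he'def
    have he'n : e' < n := Nat.mod_lt _ hn
    have he'e : (e' + r) % n = e := by
      rw [he'def, Nat.mod_add_mod, show e + (n - r) + r = e + n from by omega,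
        Nat.add_mod_right, Nat.mod_eq_of_lt he2]
    have hinj : ∀ x, x < n → (x + r) % n = e → x = e' := by
      intro x hx hxe
      have h1 : (x + r) % n = (e' + r) % n := by rw [hxe, he'e]
      have h2 : x % n = e' % n := Nat.ModEq.add_right_cancel' r h1
      rwa [Nat.mod_eq_of_lt hx, Nat.mod_eq_of_lt he'n] at h2
    by_cases hpr : p ∣ r
    · -- rotation by a multiple of the period
      have hrnp : r ≤ n - p := by
        obtain ⟨c1, hc1⟩ := hpr
        obtain ⟨c2, hc2⟩ := hpn
        have hcc : c1 < c2 := by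
          apply Nat.lt_of_mul_lt_mul_left (a := p)
          rw [← hc1, ← hc2]; exact hrn
        rcases c2 with _ | c2'
        · omega
        · have h7 : p * c1 ≤ p * c2' := Nat.mul_le_mul_left p (by omega)
          have h8 : n = p * c2' + p := by rw [hc2]; ring
          omega
      have he'val : e' = e - r := by
        rw [he'def, show e + (n - r) = (e - r) + n from by omega,
          Nat.add_mod_right, Nat.mod_eq_of_lt (by omega)]
      refine ⟨e', by omega, ?_, ?_⟩
      · intro x hx
        have hx1 : x < n := by omega
        rw [hRot x hx1, Nat.mod_eq_of_lt (show x + r < n from by omega)]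
        rw [hCx (x + r) (by omega) (by omega), hCx x (by omega) (by omega)]
        rw [HA (x + r) (by omega), HA x hx1]
        congr 1
        obtain ⟨c1, hc1⟩ := hpr
        rw [hc1, Nat.add_mul_mod_self_left]
      · rw [hRot e' (by omega), he'e, hCe, hCx e' (by omega) (by omega)]
        have h9 : A.getD e' z = A.getD e z := by
          obtain ⟨c3, hc3⟩ : p ∣ (n - p - r) := Nat.dvd_sub (Nat.dvd_sub hpn dvd_rfl) hpr
          rw [HA e' (by omega), show e' = p * c3 + τ from by omega,
            Nat.mul_add_mod, Nat.mod_eq_of_lt hτp, ← heτ]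
        rw [h9]; exact hv'lt
    · -- rotation not a multiple of the period
      have hdiff : ∃ x0, x0 < n - p ∧ A.getD ((x0 + r) % n) z ≠ A.getD x0 z := by
        by_contra h; push_neg at h
        have hr'0 : 0 < r % p :=
          Nat.pos_of_ne_zero (fun h0 => hpr (Nat.dvd_of_mod_eq_zero h0))
        apply hsmall (r % p) hr'0 (Nat.mod_lt _ hp0) ((Nat.dvd_mod_iff hkp).mpr hkr)
        intro x hx
        have h1 := h x (by omega)
        rw [HA ((x + r) % n) (Nat.mod_lt _ hn), Nat.mod_mod_of_dvd _ hpn,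
          Nat.add_mod x r p, Nat.mod_eq_of_lt hx] at h1
        exact h1
      have hARot : ∀ x, x < n → (A.rotate r).getD x z = A.getD ((x + r) % n) z := by
        intro x hx; rw [Aux13.getD_rotate z A r x (by omega), hA]
      have hd0 : ∃ d0, d0 < n - p ∧ (∀ x, x < d0 → A.getD ((x + r) % n) z = A.getD x z) ∧
          A.getD ((d0 + r) % n) z < A.getD d0 z := by
        rcases Aux13.lex_trichotomy z (A.rotate r) A (by rw [List.length_rotate]) with h | h | h
        · obtain ⟨d0, hd1, hpre, hlt1⟩ :=
            (Aux13.lex_iff' z (A.rotate r) A (by rw [List.length_rotate])).mp h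
          rw [List.length_rotate, hA] at hd1
          refine ⟨d0, ?_, fun x hx => by rw [← hARot x (by omega)]; exact hpre x hx,
            by rw [← hARot d0 hd1]; exact hlt1⟩
          obtain ⟨x0, hx0, hx0ne⟩ := hdiff
          by_contra hcon; push_neg at hcon
          exact hx0ne (by rw [← hARot x0 (by omega)]; exact hpre x0 (by omega))
        · obtain ⟨x0, hx0, hx0ne⟩ := hdiff
          exfalso; apply hx0ne
          rw [← hARot x0 (by omega), h]
        · exact absurd h (hmA r hkr)
      obtain ⟨d0, hd0np, hpre0, hlt0⟩ := hd0
      have hagree : ∀ x, x < d0 → x ≠ e' → (C.rotate r).getD x z = C.getD x z := by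
        intro x hx hxe'
        rw [hRot x (by omega)]
        have h1 : (x + r) % n ≠ e := fun hh => hxe' (hinj x (by omega) hh)
        rw [hCx ((x + r) % n) (Nat.mod_lt _ hn) h1, hCx x (by omega) (by omega)]
        exact hpre0 x hx
      rcases lt_trichotomy e' d0 with he'd | he'd | he'd
      · refine ⟨e', by omega, fun x hx => hagree x (by omega) (by omega), ?_⟩
        rw [hRot e' (by omega), he'e, hCe, hCx e' (by omega) (by omega)]
        have h2 : A.getD e' z = A.getD e z := by
          have h3 := hpre0 e' he'd
          rw [he'e] at h3; exact h3.symm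
        rw [h2]; exact hv'lt
      · refine ⟨d0, by omega, fun x hx => hagree x hx (by omega), ?_⟩
        have hde : (d0 + r) % n = e := by rw [← he'd]; exact he'e
        rw [hRot d0 (by omega), hde, hCe, hCx d0 (by omega) (by omega)]
        rw [hde] at hlt0
        exact lt_trans hv'lt hlt0
      · refine ⟨d0, by omega, fun x hx => hagree x hx (by omega), ?_⟩
        have h4 : (d0 + r) % n ≠ e := fun hh => (by omega : d0 ≠ e') (hinj d0 (by omega) hh)
        rw [hRot d0 (by omega), hCx ((d0 + r) % n) (Nat.mod_lt _ hn) h4,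
          hCx d0 (by omega) (by omega)]
        exact hlt0
  -- C is between B and A, so by hnext, ¬ (B < C)
  have hCmax' : isMaxPair s k (C, (0 : ZMod k)) := (Aux13.isMaxPair_iff s k hk C).mpr hCmax
  have hnBC : ¬ List.Lex (· < ·) B C := by
    intro h
    exact hnext ⟨C, hClen, hCmax', (Aux13.succPair_iff s k A C).mpr hCA,
      (Aux13.succPair_iff s k C B).mpr h⟩
  -- squeeze: B agrees with A on the first n - p positions
  have hsq : ∀ x, x < n - p → B.getD x z = A.getD x z := by
    by_contra h; push_neg at h
    obtain ⟨x1, hx1, hx1ne⟩ := h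
    have hex : ∃ d, d < n ∧ B.getD d z ≠ A.getD d z := ⟨x1, by omega, hx1ne⟩
    set d := Nat.find hex with hddef
    obtain ⟨hdn, hdne⟩ := Nat.find_spec hex
    have hdmin : ∀ m, m < d → ¬ (m < n ∧ B.getD m z ≠ A.getD m z) :=
      fun m hm => Nat.find_min hex hm
    have hdle : d ≤ x1 := Nat.find_min' hex ⟨by omega, hx1ne⟩
    obtain ⟨dw, hdw, hprew, hltw⟩ := (Aux13.lex_iff' z B A (by omega)).mp hBA
    rw [hB] at hdw
    have hdwd : dw = d := by
      rcases lt_trichotomy dw d with h1 | h1 | h1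
      · exact absurd ⟨hdw, ne_of_lt hltw⟩ (hdmin dw h1)
      · exact h1
      · exact absurd (hprew d h1) hdne
    rw [hdwd] at hltw
    have hBC : List.Lex (· < ·) B C := by
      rw [Aux13.lex_iff' z B C (by omega)]
      refine ⟨d, by omega, ?_, ?_⟩
      · intro x hx
        have hxn : x < n := by omega
        rw [hCx x hxn (by omega)]
        by_contra hne
        exact (hdmin x hx) ⟨hxn, hne⟩
      · rw [hCx d (by omega) (by omega)]
        exact hltw
    exact hnBC hBC
  -- the period of B
  have hqeq : reduceLen s k B = sInf {q : ℕ | k ∣ q ∧ q ∣ B.length ∧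
      B = (List.replicate (B.length / q) (B.take q)).flatten} := rfl
  have hnSB : n ∈ {q : ℕ | k ∣ q ∧ q ∣ B.length ∧
      B = (List.replicate (B.length / q) (B.take q)).flatten} := by
    refine ⟨hkn, by rw [hB], ?_⟩
    rw [hB, Nat.div_self hn]
    simp [List.take_of_length_le hB.le]
  set q := reduceLen s k B with hqdef
  have hqSB : q ∈ {q : ℕ | k ∣ q ∧ q ∣ B.length ∧
      B = (List.replicate (B.length / q) (B.take q)).flatten} := by
    rw [hqeq]; exact Nat.sInf_mem ⟨n, hnSB⟩
  obtain ⟨hkq, hqB, hBrep⟩ := hqSB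
  have hqn : q ∣ n := by rwa [hB] at hqB
  have hq0 : 0 < q := by
    rcases Nat.eq_zero_or_pos q with h | h
    · rw [h] at hqn; rw [Nat.zero_dvd] at hqn; omega
    · exact h
  have hqleN : q ≤ n := Nat.le_of_dvd hn hqn
  have HB : ∀ x, x < n → B.getD x z = B.getD (x % q) z := by
    have := (Aux13.periodize_iff z B q hq0 hqB (by omega)).mp hBrep
    intro x hx; exact this x (by omega)
  -- the period of B is larger than n - p
  have hqbig : n - p < q := by
    by_contra hcon; push_neg at hcon
    obtain ⟨d, hdn, hpre, hlt⟩ := (Aux13.lex_iff' z B A (by omega)).mp hBA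
    rw [hB] at hdn
    have hdq : q ≤ d := by
      by_contra h2; push_neg at h2
      exact absurd (hsq d (by omega)) (ne_of_lt hlt)
    have hBq : ∀ x, x < n → B.getD x z = A.getD (x % q) z := by
      intro x hx
      rw [HB x hx]
      exact hsq (x % q) (lt_of_lt_of_le (Nat.mod_lt _ hq0) hcon)
    set j := q * (d / q) with hjdef
    have hmd := Nat.mod_add_div d q
    have hdqlt : d % q < q := Nat.mod_lt _ hq0
    have hjd : j ≤ d := by omega
    have hdj : d - j = d % q := by omega
    have hkj : k ∣ j := Dvd.dvd.mul_right hkq _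
    apply hmA j hkj
    rw [Aux13.lex_iff' z A (A.rotate j) (by rw [List.length_rotate]), hA]
    have hARotj : ∀ x, x < n → (A.rotate j).getD x z = A.getD ((x + j) % n) z := by
      intro x hx; rw [Aux13.getD_rotate z A j x (by omega), hA]
    refine ⟨d - j, by omega, ?_, ?_⟩
    · intro x hx
      rw [hARotj x (by omega), Nat.mod_eq_of_lt (show x + j < n from by omega)]
      have h6 : A.getD (x + j) z = B.getD (x + j) z := (hpre (x + j) (by omega)).symm
      have h7 : B.getD (x + j) z = A.getD ((x + j) % q) z := hBq (x + j) (by omega)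
      have h8 : (x + j) % q = x := by
        rw [hjdef, Nat.add_mul_mod_self_left, Nat.mod_eq_of_lt (by omega)]
      rw [h6, h7, h8]
    · rw [hARotj (d - j) (by omega),
        show (d - j + j) % n = d from by rw [Nat.sub_add_cancel hjd]; exact Nat.mod_eq_of_lt (by omega)]
      have h10 : A.getD (d - j) z = B.getD d z := by
        rw [hdj]
        exact (hBq d (by omega)).symm
      rw [h10]
      exact hlt
  -- conclusion: A.drop p is a prefix of B.take q
  have hfin : A.drop p = (B.take q).take (n - p) := by
    apply List.ext_getElem
    · rw [List.length_drop, List.length_take, List.length_take, hA, hB]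
      omega
    · intro i h1 h2
      have h3 : i < n - p := by rw [List.length_drop, hA] at h1; exact h1
      have hL : (A.drop p).getD i z = ((B.take q).take (n - p)).getD i z := by
        rw [Aux13.getD_drop, Aux13.getD_take z _ (n - p) i h3, Aux13.getD_take z B q i (by omega)]
        rw [HA (p + i) (by omega), Nat.add_mod_left, ← HA i (by omega)]
        exact (hsq i h3).symm
      rwa [List.getD_eq_getElem _ _ h1, List.getD_eq_getElem _ _ h2] at hL
  have hpre2 : A.drop p <+: B.take q := by
    rw [hfin]; exact List.take_prefix _ _
  obtain ⟨t, ht⟩ := hpre2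
  refine ⟨t, ?_⟩
  show A ++ t = reduceWord s k A ++ reduceWord s k B
  unfold reduceWord
  rw [← hpdef, ← hqdef]
  conv_lhs => rw [← List.take_append_drop p A]
  rw [List.append_assoc, ht]
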